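/- Let φ be differentiable and strictly convex on an open convex set D ⊆ ℝ^K, let X ⊆ D be nonempty, closed, and convex, and let x⁺ be the Bregman projection of y onto X, i.e., a minimizer over X of x ↦ D_φ(x, y). Then for every x ∈ X, D_φ(x, y) ≥ D_φ(x, x⁺) + D_φ(x⁺, y). -/

import Mathlib

open InnerProductSpace

/-- Bregman divergence of `φ`. -/
noncomputable def bregman {K : ℕ} (φ : EuclideanSpace ℝ (Fin K) → ℝ)
    (u v : EuclideanSpace ℝ (Fin K)) : ℝ :=
  φ u - φ v - inner ℝ (gradient φ v) (u - v)

/-- Bregman Pythagorean theorem. -/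
theorem bregman_pythagoras {K : ℕ} (D : Set (EuclideanSpace ℝ (Fin K)))
    (hD : IsOpen D) (hDconv : Convex ℝ D)
    (φ : EuclideanSpace ℝ (Fin K) → ℝ)
    (hφdiff : ∀ z ∈ D, DifferentiableAt ℝ φ z)
    (hφconv : StrictConvexOn ℝ D φ)
    (X : Set (EuclideanSpace ℝ (Fin K))) (hXD : X ⊆ D)
    (hXne : X.Nonempty) (hXclosed : IsClosed X) (hXconv : Convex ℝ X)
    (y : EuclideanSpace ℝ (Fin K)) (hy : y ∈ D)
    (xp : EuclideanSpace ℝ (Fin K)) (hxpX : xp ∈ X)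
    (hmin : ∀ x ∈ X, bregman φ xp y ≤ bregman φ x y) :
    ∀ x ∈ X, bregman φ x xp + bregman φ xp y ≤ bregman φ x y := by
  intro x hxX
  -- the function being minimized
  set f : EuclideanSpace ℝ (Fin K) → ℝ :=
    fun z => φ z - φ y - inner ℝ (gradient φ y) (z - y) with hf
  have hfmin : IsLocalMinOn f X xp := by
    apply IsMinOn.localize
    intro z hz
    exact hmin z hz
  -- derivative of f at xp
  have hφxp : DifferentiableAt ℝ φ xp := hφdiff xp (hXD hxpX)
  have hgrad : HasGradientAt φ (gradient φ xp) xp := hφxp.hasGradientAt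
  have hFD : HasFDerivAt φ (toDual ℝ _ (gradient φ xp)) xp :=
    hasGradientAt_iff_hasFDerivAt.mp hgrad
  have hlin : HasFDerivAt (fun z : EuclideanSpace ℝ (Fin K) =>
      (inner ℝ (gradient φ y) (z - y) : ℝ))
      (innerSL ℝ (gradient φ y)) xp := by
    have h1 : HasFDerivAt (fun z : EuclideanSpace ℝ (Fin K) => z - y)
        (ContinuousLinearMap.id ℝ _) xp := (hasFDerivAt_id xp).sub_const y
    exact ((innerSL ℝ (gradient φ y)).hasFDerivAt).comp xp h1
  have hfFD : HasFDerivAt f (toDual ℝ _ (gradient φ xp) - innerSL ℝ (gradient φ y)) xp := by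
    exact (hFD.sub_const (φ y)).sub hlin
  have hcone : x - xp ∈ posTangentConeAt X xp :=
    sub_mem_posTangentConeAt_of_segment_subset (hXconv.segment_subset hxpX hxX)
  have key : (0:ℝ) ≤ (toDual ℝ _ (gradient φ xp) - innerSL ℝ (gradient φ y)) (x - xp) :=
    hfmin.hasFDerivWithinAt_nonneg hfFD.hasFDerivWithinAt hcone
  have key' : (0:ℝ) ≤ inner ℝ (gradient φ xp) (x - xp) - inner ℝ (gradient φ y) (x - xp) := by
    simpa using key
  simp only [bregman]
  have hxy : x - y = (x - xp) + (xp - y) := by abel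
  rw [hxy, inner_add_right]
  linarith
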